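/- There do not exist two nonnegative random variables X₁, X₂ with probability density functions f₁ ≠ f₂ such that X₁ ≤_{G_p} X₂ for all p ≥ 0. Equivalently: if for every nonnegative integer p and all ρ > 0 one has (-1)^p d^p/dρ^p [L₁(ρ) - L₂(ρ)] ≥ 0, where L_i is the Laplace transform of f_i, then f₁ - f₂ is the Laplace representing function of a completely monotone function, forcing f₁(x) ≥ f₂(x) for a.e. x, which contradicts ∫f₁ = ∫f₂ = 1 unless f₁ = f₂ a.e. -/

import Mathlib

open MeasureTheory Set Real

/-- multiplying an integrable function by a function bounded on `Ioi 0` keeps integrability -/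
lemma aux_mul_int {g c : ℝ → ℝ} (hg : Integrable g (volume.restrict (Set.Ioi 0)))
    (hc : AEStronglyMeasurable c (volume.restrict (Set.Ioi 0))) {C : ℝ}
    (hbd : ∀ x ∈ Set.Ioi (0:ℝ), |c x| ≤ C) :
    Integrable (fun x => c x * g x) (volume.restrict (Set.Ioi 0)) := by
  apply Integrable.mono' (hg.abs.const_mul C) (hc.mul hg.aestronglyMeasurable)
  filter_upwards [ae_restrict_mem measurableSet_Ioi] with x hx
  have h1 : |c x| ≤ C := hbd x hx
  have : ‖(c * g) x‖ = |c x| * |g x| := abs_mul _ _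
  rw [this]
  exact mul_le_mul_of_nonneg_right h1 (abs_nonneg _)

lemma aux_laplace_zero (g : ℝ → ℝ) (hg_meas : Measurable g)
    (hg : Integrable g (volume.restrict (Set.Ioi 0)))
    (h0 : ∫ x in Set.Ioi (0:ℝ), g x = 0)
    (hP0 : ∀ ρ : ℝ, 0 < ρ → 0 ≤ ∫ x in Set.Ioi (0:ℝ), Real.exp (-ρ*x) * g x)
    (hP1 : ∀ ρ : ℝ, 0 < ρ → 0 ≤ ∫ x in Set.Ioi (0:ℝ), x * Real.exp (-ρ*x) * g x) :
    ∀ ρ : ℝ, 0 ≤ ρ → ∫ x in Set.Ioi (0:ℝ), Real.exp (-ρ*x) * g x = 0 := by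
  set μ := volume.restrict (Set.Ioi (0:ℝ)) with hμ
  set F : ℝ → ℝ := fun ρ => ∫ x in Set.Ioi (0:ℝ), Real.exp (-ρ*x) * g x with hF
  have hmeasσ : ∀ σ : ℝ, AEStronglyMeasurable (fun x => Real.exp (-σ*x) * g x) μ :=
    fun σ => (((measurable_id.const_mul (-σ)).exp).mul hg_meas).aestronglyMeasurable
  have hintσ : ∀ σ : ℝ, 0 ≤ σ → Integrable (fun x => Real.exp (-σ*x) * g x) μ := by
    intro σ hσ
    apply aux_mul_int hg (c := fun x => Real.exp (-σ*x))
      ((measurable_id.const_mul (-σ)).exp).aestronglyMeasurable (C := 1)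
    intro x hx
    rw [abs_of_pos (Real.exp_pos _)]
    apply Real.exp_le_one_iff.2
    have : (0:ℝ) < x := hx
    nlinarith
  have hF0 : F 0 = 0 := by
    rw [hF]
    simp only [neg_zero, zero_mul, Real.exp_zero, one_mul]
    exact h0
  have hcont : ContinuousOn F (Set.Ici 0) := by
    intro ρ₀ hρ₀
    have : Filter.Tendsto F (nhdsWithin ρ₀ (Set.Ici 0)) (nhds (F ρ₀)) := by
      apply MeasureTheory.tendsto_integral_filter_of_dominated_convergence
        (bound := fun x => |g x|)
      · exact Filter.Eventually.of_forall fun σ => hmeasσ σ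
      · filter_upwards [self_mem_nhdsWithin] with σ hσ
        filter_upwards [ae_restrict_mem measurableSet_Ioi] with x hx
        have hx0 : (0:ℝ) < x := hx
        have hσ0 : (0:ℝ) ≤ σ := hσ
        have : Real.exp (-σ*x) ≤ 1 := by
          apply Real.exp_le_one_iff.2; nlinarith
        rw [Real.norm_eq_abs, abs_mul, abs_of_pos (Real.exp_pos _)]
        calc Real.exp (-σ*x) * |g x| ≤ 1 * |g x| :=
              mul_le_mul_of_nonneg_right this (abs_nonneg _)
          _ = |g x| := one_mul _
      · exact hg.abs
      · filter_upwards [ae_restrict_mem measurableSet_Ioi] with x hx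
        have : Continuous (fun σ : ℝ => Real.exp (-σ*x) * g x) := by
          continuity
        exact this.continuousAt.continuousWithinAt.tendsto
    exact this
  have hderiv : ∀ ρ : ℝ, 0 < ρ →
      HasDerivAt F (∫ x in Set.Ioi (0:ℝ), -(x * Real.exp (-ρ*x) * g x)) ρ := by
    intro ρ hρ
    have hball : ∀ σ ∈ Metric.ball ρ (ρ/2), ρ/2 ≤ σ := by
      intro σ hσ
      have := abs_lt.1 (mem_ball_iff_norm.1 hσ)
      linarith [this.1]
    have key := hasDerivAt_integral_of_dominated_loc_of_lip
      (F := fun σ x => Real.exp (-σ*x) * g x)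
      (F' := fun x => -(x * Real.exp (-ρ*x) * g x))
      (bound := fun x => (2/ρ) * |g x|) (μ := μ) (x₀ := ρ) (s := Metric.ball ρ (ρ/2))
      (Metric.ball_mem_nhds ρ (by positivity))
      (Filter.Eventually.of_forall fun σ => hmeasσ σ)
      (hintσ ρ hρ.le)
      ?_ ?_ ?_ ?_
    · exact key.2
    · exact ((measurable_id.mul ((measurable_id.const_mul (-ρ)).exp)).mul hg_meas).neg.aestronglyMeasurable
    · filter_upwards [ae_restrict_mem measurableSet_Ioi] with x hx
      have hx0 : (0:ℝ) < x := hx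
      apply Convex.lipschitzOnWith_of_nnnorm_hasDerivWithin_le (convex_ball ρ (ρ/2))
        (f' := fun σ => -(x * Real.exp (-σ*x)) * g x)
      · intro σ hσ
        have h1 : HasDerivAt (fun σ : ℝ => Real.exp (-σ*x)) (-(x * Real.exp (-σ*x))) σ := by
          have h2 : HasDerivAt (fun σ : ℝ => -σ*x) (-x) σ := by
            simpa [mul_comm] using (hasDerivAt_id σ).const_mul (-x)
          have h3 := h2.exp
          convert h3 using 1
          ring
        exact ((h1.mul_const (g x)).hasDerivWithinAt)
      · intro σ hσ
        have hσ2 : ρ/2 ≤ σ := hball σ hσ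
        rw [← NNReal.coe_le_coe]
        simp only [coe_nnnorm, Real.coe_nnabs, Real.norm_eq_abs]
        have hxe : x * Real.exp (-σ*x) ≤ 2/ρ := by
          have h3 : σ * x + 1 ≤ Real.exp (σ*x) := Real.add_one_le_exp _
          have h4 : Real.exp (-σ*x) * Real.exp (σ*x) = 1 := by
            rw [← Real.exp_add]; simp
          have h5 : (0:ℝ) < Real.exp (-σ*x) := Real.exp_pos _
          rw [le_div_iff₀ hρ]
          nlinarith [mul_nonneg (mul_nonneg hx0.le h5.le) (sub_nonneg.2 hσ2),
            mul_nonneg h5.le (sub_nonneg.2 (by linarith : σ * x ≤ Real.exp (σ*x) - 1))]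
        have habs : |(-(x * Real.exp (-σ*x)) * g x)| = (x * Real.exp (-σ*x)) * |g x| := by
          rw [abs_mul, abs_neg, abs_of_nonneg (by positivity)]
        rw [habs, abs_of_nonneg (by positivity : (0:ℝ) ≤ 2/ρ * |g x|)]
        exact mul_le_mul_of_nonneg_right hxe (abs_nonneg _)
    · exact hg.abs.const_mul (2/ρ)
    · filter_upwards [ae_restrict_mem measurableSet_Ioi] with x hx
      have h1 : HasDerivAt (fun σ : ℝ => Real.exp (-σ*x)) (-(x * Real.exp (-ρ*x))) ρ := by
        have h2 : HasDerivAt (fun σ : ℝ => -σ*x) (-x) ρ := by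
          simpa [mul_comm] using (hasDerivAt_id ρ).const_mul (-x)
        have h3 := h2.exp
        convert h3 using 1
        ring
      have h4 := h1.mul_const (g x)
      exact h4.congr_deriv (by ring)
  have hanti : AntitoneOn F (Set.Ici 0) := by
    apply antitoneOn_of_deriv_nonpos (convex_Ici 0) hcont
    · intro ρ hρ
      rw [interior_Ici] at hρ
      exact (hderiv ρ hρ).differentiableAt.differentiableWithinAt
    · intro ρ hρ
      rw [interior_Ici] at hρ
      rw [(hderiv ρ hρ).deriv]
      rw [MeasureTheory.integral_neg]
      simpa using hP1 ρ hρ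
  intro ρ hρ
  rcases eq_or_lt_of_le hρ with h | h
  · rw [← h]; exact hF0
  · have h1 : F ρ ≤ F 0 := hanti (Set.self_mem_Ici) hρ hρ
    have h2 : 0 ≤ F ρ := hP0 ρ h
    have := hF0
    show F ρ = 0
    linarith

lemma aux_ae_zero (g : ℝ → ℝ) (hg_meas : Measurable g)
    (hg : Integrable g (volume.restrict (Set.Ioi 0)))
    (hL : ∀ ρ : ℝ, 0 ≤ ρ → ∫ x in Set.Ioi (0:ℝ), Real.exp (-ρ*x) * g x = 0) :
    ∀ᵐ x ∂(volume.restrict (Set.Ioi (0:ℝ))), g x = 0 := by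
  set μ := volume.restrict (Set.Ioi (0:ℝ)) with hμ
  have key : ∀ᵐ x ∂(volume : Measure ℝ), x ∈ Set.Ioi (0:ℝ) → g x = 0 := by
    apply isOpen_Ioi.ae_eq_zero_of_integral_contDiff_smul_eq_zero
      (MeasureTheory.IntegrableOn.locallyIntegrableOn hg)
    intro φ hφ hφc hφs
    -- reduce to an integral over `Ioi 0`
    rw [← MeasureTheory.setIntegral_eq_integral_of_forall_compl_eq_zero
      (s := Set.Ioi (0:ℝ)) (fun x hx => by
        rw [image_eq_zero_of_notMem_tsupport (fun hmem => hx (hφs hmem))]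
        simp)]
    simp only [smul_eq_mul]
    -- bound the support of φ
    obtain ⟨R₀, hR₀⟩ := hφc.isBounded.subset_closedBall 0
    set R : ℝ := max R₀ 0 with hRdef
    have hφ0 : ∀ x : ℝ, R < |x| → φ x = 0 := by
      intro x hx
      apply image_eq_zero_of_notMem_tsupport
      intro hmem
      have := hR₀ hmem
      rw [Metric.mem_closedBall, Real.dist_eq, sub_zero] at this
      have : |x| ≤ R := le_trans this (le_max_left _ _)
      linarith
    have hφzero : φ 0 = 0 :=
      image_eq_zero_of_notMem_tsupport (fun hmem => absurd (hφs hmem) (by simp))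
    -- the substituted function ψ
    set ψ : ℝ → ℝ := fun t => φ (-Real.log t) with hψdef
    have hψ0 : ∀ t : ℝ, |t| < Real.exp (-(R+1)) → ψ t = 0 := by
      intro t ht
      by_cases h0 : t = 0
      · simp [hψdef, h0, Real.log_zero, hφzero]
      · have habs : (0:ℝ) < |t| := abs_pos.2 h0
        have hlog : Real.log t < -(R+1) := by
          rw [← Real.log_abs, Real.log_lt_iff_lt_exp habs]
          exact ht
        have hR0 : (0:ℝ) ≤ R := le_max_right _ _
        rw [hψdef]
        apply hφ0
        rw [abs_neg, abs_of_neg (by linarith : Real.log t < 0)]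
        linarith
    have hψcont : Continuous ψ := by
      rw [continuous_iff_continuousAt]
      intro t
      by_cases ht : t = 0
      · subst ht
        apply continuousAt_const.congr (f := fun _ => (0:ℝ))
        filter_upwards [Metric.ball_mem_nhds (0:ℝ) (Real.exp_pos (-(R+1)))] with t htb
        rw [Metric.mem_ball, Real.dist_eq, sub_zero] at htb
        exact (hψ0 t htb).symm
      · exact hφ.continuous.continuousAt.comp ((Real.continuousAt_log ht).neg)
    have hψφ : ∀ x : ℝ, ψ (Real.exp (-x)) = φ x := by
      intro x; rw [hψdef]; simp [Real.log_exp]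
    -- φ is bounded
    obtain ⟨M, hM⟩ := (hφ.continuous.abs).bounded_above_of_compact_support hφc.abs
    have hint_phig : Integrable (fun x => φ x * g x) μ :=
      aux_mul_int hg hφ.continuous.measurable.aestronglyMeasurable (C := M) (fun x _ => by simpa [abs_abs] using hM x)
    set C : ℝ := ∫ x in Set.Ioi (0:ℝ), |g x| with hCdef
    have hC0 : 0 ≤ C := MeasureTheory.integral_nonneg fun x => abs_nonneg _
    have hkey : ∀ ε : ℝ, 0 < ε → |∫ x in Set.Ioi (0:ℝ), φ x * g x| ≤ ε * C := by
      intro ε hε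
      obtain ⟨q, hq⟩ := exists_polynomial_near_of_continuousOn 0 1 ψ hψcont.continuousOn ε hε
      have hterm_int : ∀ i : ℕ, Integrable (fun x => q.coeff i * Real.exp (-x) ^ i * g x) μ := by
        intro i
        apply aux_mul_int hg
          (measurable_const.mul ((measurable_id.neg.exp).pow_const i)).aestronglyMeasurable
          (C := |q.coeff i|)
        intro x hx
        have hx0 : (0:ℝ) < x := hx
        have h1 : Real.exp (-x) ≤ 1 := Real.exp_le_one_iff.2 (by linarith)
        show |q.coeff i * Real.exp (-x) ^ i| ≤ |q.coeff i|
        rw [abs_mul, abs_pow, abs_of_pos (Real.exp_pos _)]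
        calc |q.coeff i| * Real.exp (-x) ^ i ≤ |q.coeff i| * 1 := by
              apply mul_le_mul_of_nonneg_left _ (abs_nonneg _)
              exact pow_le_one₀ (Real.exp_pos _).le h1
          _ = |q.coeff i| := mul_one _
      have hsum : ∀ x : ℝ, Polynomial.eval (Real.exp (-x)) q * g x
          = ∑ i ∈ Finset.range (q.natDegree + 1), q.coeff i * Real.exp (-x) ^ i * g x := by
        intro x
        rw [Polynomial.eval_eq_sum_range, Finset.sum_mul]
      have hqg_int : Integrable (fun x => Polynomial.eval (Real.exp (-x)) q * g x) μ :=
        (MeasureTheory.integrable_finset_sum _ (fun i _ => hterm_int i)).congr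
          (Filter.Eventually.of_forall (fun x => (hsum x).symm))
      have hqint0 : ∫ x in Set.Ioi (0:ℝ), Polynomial.eval (Real.exp (-x)) q * g x = 0 := by
        rw [MeasureTheory.integral_congr_ae (Filter.Eventually.of_forall hsum)]
        rw [MeasureTheory.integral_finset_sum _ (fun i _ => hterm_int i)]
        apply Finset.sum_eq_zero
        intro i _
        have hterm : ∀ x : ℝ, q.coeff i * Real.exp (-x) ^ i * g x
            = q.coeff i * (Real.exp (-(i:ℝ)*x) * g x) := by
          intro x
          rw [← Real.exp_nat_mul, show ((i:ℝ) * -x) = (-(i:ℝ)*x) by ring]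
          ring
        rw [MeasureTheory.integral_congr_ae (Filter.Eventually.of_forall hterm),
          MeasureTheory.integral_const_mul, hL (i:ℝ) (Nat.cast_nonneg i), mul_zero]
      have hdiff : ∀ x ∈ Set.Ioi (0:ℝ), |φ x - Polynomial.eval (Real.exp (-x)) q| ≤ ε := by
        intro x hx
        have hx0 : (0:ℝ) < x := hx
        have hmem : Real.exp (-x) ∈ Set.Icc (0:ℝ) 1 :=
          ⟨(Real.exp_pos _).le, Real.exp_le_one_iff.2 (by linarith)⟩
        have h2 := hq _ hmem
        rw [hψφ x] at h2
        rw [abs_sub_comm]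
        exact h2.le
      have hsub_int : Integrable
          (fun x => (φ x - Polynomial.eval (Real.exp (-x)) q) * g x) μ := by
        have heqf : (fun x => (φ x - Polynomial.eval (Real.exp (-x)) q) * g x)
            = fun x => φ x * g x - Polynomial.eval (Real.exp (-x)) q * g x :=
          funext fun x => by ring
        rw [heqf]
        exact hint_phig.sub hqg_int
      have heq : ∫ x in Set.Ioi (0:ℝ), (φ x - Polynomial.eval (Real.exp (-x)) q) * g x
          = ∫ x in Set.Ioi (0:ℝ), φ x * g x := by
        simp_rw [sub_mul]
        rw [MeasureTheory.integral_sub hint_phig hqg_int, hqint0, sub_zero]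
      rw [← heq]
      calc |∫ x in Set.Ioi (0:ℝ), (φ x - Polynomial.eval (Real.exp (-x)) q) * g x|
          ≤ ∫ x in Set.Ioi (0:ℝ), |(φ x - Polynomial.eval (Real.exp (-x)) q) * g x| := by
            have hni := MeasureTheory.norm_integral_le_integral_norm
              (μ := μ) (fun x => (φ x - Polynomial.eval (Real.exp (-x)) q) * g x)
            simp only [Real.norm_eq_abs] at hni
            exact hni
        _ ≤ ∫ x in Set.Ioi (0:ℝ), ε * |g x| := by
            apply MeasureTheory.integral_mono_ae hsub_int.abs (hg.abs.const_mul ε)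
            filter_upwards [ae_restrict_mem measurableSet_Ioi] with x hx
            calc |(φ x - Polynomial.eval (Real.exp (-x)) q) * g x|
                = |φ x - Polynomial.eval (Real.exp (-x)) q| * |g x| := abs_mul _ _
              _ ≤ ε * |g x| := mul_le_mul_of_nonneg_right (hdiff x hx) (abs_nonneg _)
        _ = ε * C := MeasureTheory.integral_const_mul ε _
    by_contra hne
    have habs : 0 < |∫ x in Set.Ioi (0:ℝ), φ x * g x| := abs_pos.2 hne
    have h1 := hkey (|∫ x in Set.Ioi (0:ℝ), φ x * g x| / (2*(C+1))) (by positivity)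
    have h2 : (|∫ x in Set.Ioi (0:ℝ), φ x * g x| / (2*(C+1))) * C
        < |∫ x in Set.Ioi (0:ℝ), φ x * g x| := by
      rw [div_mul_eq_mul_div, div_lt_iff₀ (by positivity)]
      nlinarith
    linarith
  rw [hμ]
  exact (MeasureTheory.ae_restrict_iff' measurableSet_Ioi).2 key

/-- Theorem 4 of the paper: no two nonnegative random variables with (essentially)
distinct densities can satisfy `X₁ ≤_{G_p} X₂` for every `p ≥ 0`. Formulated with
densities: if `f₁, f₂` are probability densities on `(0,∞)` and for every `p ≥ 0`,
`ρ > 0` we have `∫ x^p e^{-ρx} f₁(x) dx ≥ ∫ x^p e^{-ρx} f₂(x) dx`, then `f₁ = f₂` a.e. -/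
theorem no_Gp_order_for_all_p (f₁ f₂ : ℝ → ℝ)
    (h₁_meas : Measurable f₁) (h₂_meas : Measurable f₂)
    (h₁_nonneg : ∀ x, 0 ≤ f₁ x) (h₂_nonneg : ∀ x, 0 ≤ f₂ x)
    (h₁_int : Integrable f₁ (volume.restrict (Set.Ioi 0)))
    (h₂_int : Integrable f₂ (volume.restrict (Set.Ioi 0)))
    (h₁_pdf : ∫ x in Set.Ioi (0 : ℝ), f₁ x = 1)
    (h₂_pdf : ∫ x in Set.Ioi (0 : ℝ), f₂ x = 1)
    (hord : ∀ p : ℝ, 0 ≤ p → ∀ ρ : ℝ, 0 < ρ →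
      ∫ x in Set.Ioi (0 : ℝ), x ^ p * Real.exp (-ρ * x) * f₂ x ≤
        ∫ x in Set.Ioi (0 : ℝ), x ^ p * Real.exp (-ρ * x) * f₁ x) :
    f₁ =ᵐ[volume.restrict (Set.Ioi 0)] f₂ := by
  have hg_meas : Measurable (fun x => f₁ x - f₂ x) := h₁_meas.sub h₂_meas
  have hg_int : Integrable (fun x => f₁ x - f₂ x) (volume.restrict (Set.Ioi 0)) :=
    h₁_int.sub h₂_int
  have h0 : ∫ x in Set.Ioi (0:ℝ), (f₁ x - f₂ x) = 0 := by
    rw [MeasureTheory.integral_sub h₁_int h₂_int, h₁_pdf, h₂_pdf, sub_self]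
  -- bounded multiplier integrability for `exp (-ρ x) * fᵢ`
  have hexp_bd : ∀ ρ : ℝ, 0 < ρ → ∀ x ∈ Set.Ioi (0:ℝ), |Real.exp (-ρ*x)| ≤ 1 := by
    intro ρ hρ x hx
    have hx0 : (0:ℝ) < x := hx
    rw [abs_of_pos (Real.exp_pos _)]
    apply Real.exp_le_one_iff.2
    nlinarith
  have hexp_meas : ∀ ρ : ℝ, Measurable (fun x : ℝ => Real.exp (-ρ*x)) :=
    fun ρ => (measurable_id.const_mul (-ρ)).exp
  have hxexp_bd : ∀ ρ : ℝ, 0 < ρ → ∀ x ∈ Set.Ioi (0:ℝ), |x * Real.exp (-ρ*x)| ≤ 1/ρ := by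
    intro ρ hρ x hx
    have hx0 : (0:ℝ) < x := hx
    rw [abs_of_pos (mul_pos hx0 (Real.exp_pos _))]
    have h3 : ρ * x + 1 ≤ Real.exp (ρ*x) := Real.add_one_le_exp _
    have h4 : Real.exp (-ρ*x) * Real.exp (ρ*x) = 1 := by
      rw [← Real.exp_add]; ring_nf; exact Real.exp_zero
    have h5 : (0:ℝ) < Real.exp (-ρ*x) := Real.exp_pos _
    rw [le_div_iff₀ hρ]
    nlinarith [mul_nonneg h5.le (sub_nonneg.2 (by linarith : ρ * x ≤ Real.exp (ρ*x) - 1))]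
  have hxexp_meas : ∀ ρ : ℝ, Measurable (fun x : ℝ => x * Real.exp (-ρ*x)) :=
    fun ρ => measurable_id.mul (hexp_meas ρ)
  have hP0 : ∀ ρ : ℝ, 0 < ρ → 0 ≤ ∫ x in Set.Ioi (0:ℝ), Real.exp (-ρ*x) * (f₁ x - f₂ x) := by
    intro ρ hρ
    have hI := hord 0 le_rfl ρ hρ
    simp only [Real.rpow_zero, one_mul] at hI
    have e1 : Integrable (fun x => Real.exp (-ρ*x) * f₁ x) (volume.restrict (Set.Ioi 0)) :=
      aux_mul_int h₁_int (hexp_meas ρ).aestronglyMeasurable (hexp_bd ρ hρ)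
    have e2 : Integrable (fun x => Real.exp (-ρ*x) * f₂ x) (volume.restrict (Set.Ioi 0)) :=
      aux_mul_int h₂_int (hexp_meas ρ).aestronglyMeasurable (hexp_bd ρ hρ)
    have heq : ∫ x in Set.Ioi (0:ℝ), Real.exp (-ρ*x) * (f₁ x - f₂ x)
        = (∫ x in Set.Ioi (0:ℝ), Real.exp (-ρ*x) * f₁ x)
          - ∫ x in Set.Ioi (0:ℝ), Real.exp (-ρ*x) * f₂ x := by
      simp_rw [mul_sub]
      exact MeasureTheory.integral_sub e1 e2
    rw [heq]
    linarith
  have hP1 : ∀ ρ : ℝ, 0 < ρ →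
      0 ≤ ∫ x in Set.Ioi (0:ℝ), x * Real.exp (-ρ*x) * (f₁ x - f₂ x) := by
    intro ρ hρ
    have hI := hord 1 zero_le_one ρ hρ
    simp only [Real.rpow_one] at hI
    have e1 : Integrable (fun x => x * Real.exp (-ρ*x) * f₁ x) (volume.restrict (Set.Ioi 0)) :=
      aux_mul_int h₁_int (hxexp_meas ρ).aestronglyMeasurable (hxexp_bd ρ hρ)
    have e2 : Integrable (fun x => x * Real.exp (-ρ*x) * f₂ x) (volume.restrict (Set.Ioi 0)) :=
      aux_mul_int h₂_int (hxexp_meas ρ).aestronglyMeasurable (hxexp_bd ρ hρ)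
    have heq : ∫ x in Set.Ioi (0:ℝ), x * Real.exp (-ρ*x) * (f₁ x - f₂ x)
        = (∫ x in Set.Ioi (0:ℝ), x * Real.exp (-ρ*x) * f₁ x)
          - ∫ x in Set.Ioi (0:ℝ), x * Real.exp (-ρ*x) * f₂ x := by
      simp_rw [mul_sub]
      exact MeasureTheory.integral_sub e1 e2
    rw [heq]
    linarith
  have hL := aux_laplace_zero (fun x => f₁ x - f₂ x) hg_meas hg_int h0 hP0 hP1
  have hz := aux_ae_zero (fun x => f₁ x - f₂ x) hg_meas hg_int hL
  filter_upwards [hz] with x hx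
  linarith
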